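/- Suppose there is a λ-dense, κ-complete, normal ideal I on 𝒫_κ(λ) such that every I-positive set has cardinality ≥ η. Then for all μ, ν < κ, the polarized partition relation (λ⁺, λ^{<κ}) → (μ, η)_ν holds: for every coloring f : λ⁺ × λ^{<κ} → ν there exist A ⊆ λ⁺ of size μ and B ⊆ λ^{<κ} of size η such that f is constant on A × B. -/

import Mathlib

open Cardinal Set

/-- `I` is a (nonprincipal, proper) ideal on the set `Z` of points of type `P`. -/
structure IdealOn {P : Type*} (Z : Set P) (I : Set (Set P)) : Prop where
  mono : ∀ {A B : Set P}, A ⊆ B → B ∈ I → A ∈ I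
  union : ∀ {A B : Set P}, A ∈ I → B ∈ I → A ∪ B ∈ I
  subset_Z : ∀ A ∈ I, A ⊆ Z
  nonprincipal : ∀ z ∈ Z, {z} ∈ I
  proper : Z ∉ I

/-- `A` is an `I`-positive subset of `Z`. -/
def Pos {P : Type*} (Z : Set P) (I : Set (Set P)) (A : Set P) : Prop := A ⊆ Z ∧ A ∉ I

/-- The restricted ideal `I ↾ A = {B : B ∩ A ∈ I}`. -/
def restrict {P : Type*} (I : Set (Set P)) (A : Set P) : Set (Set P) := {B | B ∩ A ∈ I}

/-- The restricted ideal `I ↾ A`, as an ideal on `Z` (members required to be `⊆ Z`). -/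
def restrictOn {P : Type*} (Z : Set P) (I : Set (Set P)) (A : Set P) : Set (Set P) :=
  {B | B ⊆ Z ∧ B ∩ A ∈ I}

/-- `I` is `κ`-complete: closed under unions of length `< κ`. -/
def Complete {P : Type*} (I : Set (Set P)) (κ : Cardinal.{0}) : Prop :=
  ∀ (o : Ordinal.{0}) (f : Ordinal.{0} → Set P), o < κ.ord → (∀ i < o, f i ∈ I) →
    (⋃ i ∈ Set.Iio o, f i) ∈ I

/-- `I` is `δ`-saturated: there is no `δ`-sequence of `I`-positive sets that are
pairwise almost disjoint modulo `I`. -/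
def Saturated {P : Type*} (Z : Set P) (I : Set (Set P)) (δ : Cardinal.{0}) : Prop :=
  ¬ ∃ f : Ordinal.{0} → Set P, (∀ i < δ.ord, Pos Z I (f i)) ∧
      ∀ i j, i < δ.ord → j < δ.ord → i ≠ j → f i ∩ f j ∈ I

/-- The set `x` of ordinals has order type `a`. -/
def HasOtype (x : Set Ordinal.{0}) (a : Ordinal.{0}) : Prop :=
  Nonempty ((Subrel ((· < ·) : Ordinal → Ordinal → Prop) x) ≃r
    (Subrel ((· < ·) : Ordinal → Ordinal → Prop) (Set.Iio a)))

/-- The set `x` of ordinals has order type at least `a`. -/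
def OtypeGE (x : Set Ordinal.{0}) (a : Ordinal.{0}) : Prop :=
  Nonempty ((Subrel ((· < ·) : Ordinal → Ordinal → Prop) (Set.Iio a)) ↪r
    (Subrel ((· < ·) : Ordinal → Ordinal → Prop) x))

/-- `I` is `(a,b)`-regular: every `b`-sequence of positive sets has a positive refinement
with empty intersections along index sets of order type `a`. -/
def Regular2 {P : Type*} (Z : Set P) (I : Set (Set P)) (a b : Ordinal.{0}) : Prop :=
  ∀ A : Ordinal.{0} → Set P, (∀ i < b, Pos Z I (A i)) →
    ∃ B : Ordinal.{0} → Set P,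
      (∀ i < b, B i ⊆ A i ∧ Pos Z I (B i)) ∧
      ∀ x : Set Ordinal.{0}, x ⊆ Set.Iio b → HasOtype x a → ⋂ i ∈ x, B i = ∅

/-- `I` is `(a,b,c)`-regular: every `c`-sequence of positive sets has a positive refinement
whose intersections along index sets of order type `b` have cardinality at most `a`. -/
def Regular3 {P : Type u} (Z : Set P) (I : Set (Set P)) (a : Cardinal.{u}) (b c : Ordinal.{0}) :
    Prop :=
  ∀ A : Ordinal.{0} → Set P, (∀ i < c, Pos Z I (A i)) →
    ∃ B : Ordinal.{0} → Set P,
      (∀ i < c, B i ⊆ A i ∧ Pos Z I (B i)) ∧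
      ∀ x : Set Ordinal.{0}, x ⊆ Set.Iio c → HasOtype x b → #↥(⋂ i ∈ x, B i) ≤ a

/-- Normality of an ideal on `Z ⊆ 𝒫(lam)` (points are sets of ordinals `< lam`):
each `x̂ = {z : x ∈ z}` is measure one, and every regressive function on a positive
set is constant on a positive set. -/
structure NormalP (lam : Ordinal.{0}) (Z : Set (Set Ordinal.{0}))
    (I : Set (Set (Set Ordinal.{0}))) : Prop where
  hat : ∀ x < lam, {z ∈ Z | x ∉ z} ∈ I
  regress : ∀ (A : Set (Set Ordinal.{0})) (f : Set Ordinal.{0} → Ordinal.{0}),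
    Pos Z I A → (∀ z ∈ A, f z ∈ z) →
    ∃ x, ∃ B ⊆ A, Pos Z I B ∧ ∀ z ∈ B, f z = x

/-- Normality of an ideal on `Z ⊆ 𝒫(X)` for an abstract set `X`. -/
structure NormalOn {X : Type*} (Z : Set (Set X)) (I : Set (Set (Set X))) : Prop where
  hat : ∀ x : X, {z ∈ Z | x ∉ z} ∈ I
  regress : ∀ (A : Set (Set X)) (f : Set X → X),
    Pos Z I A → (∀ z ∈ A, f z ∈ z) →
    ∃ x, ∃ B ⊆ A, Pos Z I B ∧ ∀ z ∈ B, f z = x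

/-- `𝒫_κ(lam)`, as the collection of sets of ordinals below `lam` of size `< κ`. -/
def Pkl (κ : Cardinal.{0}) (lam : Ordinal.{0}) : Set (Set Ordinal.{0}) :=
  {z | z ⊆ Set.Iio lam ∧ #↥z < Cardinal.lift.{1} κ}
/-- If there is a `λ`-dense `κ`-complete normal ideal `I` on `𝒫_κ(λ)` all of
whose positive sets have cardinality `≥ η`, then for all `μ, ν < κ` the polarized partition
relation `(λ⁺, λ^{<κ}) → (μ, η)_ν` holds. -/
theorem stmt12 (κ lam η μ ν : Cardinal.{0}) (hμ : μ < κ) (hν : ν < κ)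
    (Z : Set (Set Ordinal.{0})) (hZ : Z = Pkl κ lam.ord)
    (I : Set (Set (Set Ordinal.{0})))
    (hI : IdealOn Z I) (hcomp : Complete I κ) (hnorm : NormalP lam.ord Z I)
    (hdense : ∃ D : Ordinal → Set (Set Ordinal.{0}),
      (∀ i < lam.ord, Pos Z I (D i)) ∧
      ∀ A, Pos Z I A → ∃ i < lam.ord, D i \ A ∈ I)
    (hbig : ∀ A, Pos Z I A → Cardinal.lift.{1} η ≤ #↥A)
    (f : Ordinal → Ordinal → Ordinal)
    (hf : ∀ α < (Order.succ lam).ord, ∀ β < (lam ^< κ).ord, f α β < ν.ord) :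
    ∃ (A B : Set Ordinal.{0}) (c : Ordinal),
      A ⊆ Set.Iio (Order.succ lam).ord ∧ #↥A = Cardinal.lift.{1} μ ∧
      B ⊆ Set.Iio (lam ^< κ).ord ∧ #↥B = Cardinal.lift.{1} η ∧
      ∀ α ∈ A, ∀ β ∈ B, f α β = c := by
  classical
  obtain ⟨D, hDpos, hDdense⟩ := hdense
  set L := lam.ord with hLdef
  set Lp := (Order.succ lam).ord with hLpdef
  set Lam := (lam ^< κ).ord with hLamdef
  -- κ is positive
  have hκ0 : 0 < κ := lt_of_le_of_lt zero_le hμ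
  have hord0 : (0 : Ordinal) < κ.ord := by
    rw [← Cardinal.ord_zero]; exact Cardinal.ord_lt_ord.2 hκ0
  -- the empty set is null
  have hempty : (∅ : Set (Set Ordinal)) ∈ I := by
    have h := hcomp 0 (fun _ => ∅) hord0 (fun i hi => absurd hi (by simp))
    have he : (⋃ i ∈ Set.Iio (0 : Ordinal), (fun _ => (∅ : Set (Set Ordinal))) i) = ∅ := by
      simp
    rwa [he] at h
  -- finite subsets of Z are null
  have hfin : ∀ s : Set (Set Ordinal.{0}), s.Finite → s ⊆ Z → s ∈ I := by
    intro s hsfin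
    refine Set.Finite.induction_on (motive := fun t _ => t ⊆ Z → t ∈ I) s hsfin (fun _ => hempty) ?_
    intro a t ha hfint ih hsub
    rw [Set.insert_eq]
    exact hI.union (hI.nonprincipal _ (hsub (Set.mem_insert _ _)))
      (ih (fun x hx => hsub (Set.mem_insert_of_mem _ hx)))
  have hZinf : ¬ Z.Finite := fun h => hI.proper (hfin Z h (subset_refl Z))
  -- lam is infinite
  have hlam : ℵ₀ ≤ lam := by
    by_contra h
    push_neg at h
    have h1 : (Set.Iio L).Finite := by
      rw [← Cardinal.lt_aleph0_iff_set_finite, Ordinal.mk_Iio_ordinal, Cardinal.card_ord]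
      exact Cardinal.lift_lt_aleph0.2 h
    refine hZinf (Set.Finite.subset h1.finite_subsets ?_)
    intro z hz
    exact ((hZ ▸ hz : z ∈ Pkl κ L)).1
  -- κ is at least 2
  have hκ1 : 1 < κ := by
    by_contra h
    push_neg at h
    refine hZinf (Set.Finite.subset (Set.finite_singleton ∅) ?_)
    intro z hz
    have h2 : #↥z < Cardinal.lift.{1} κ := ((hZ ▸ hz : z ∈ Pkl κ L)).2
    have h3 : #↥z < 1 := lt_of_lt_of_le h2 (by
      have := Cardinal.lift_le.2 h
      rwa [Cardinal.lift_one] at this)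
    have h4 : #↥z = 0 := Cardinal.lt_one_iff_zero.1 h3
    have h5 : z = ∅ := by
      rw [← Set.isEmpty_coe_sort, ← Cardinal.mk_eq_zero_iff]; exact h4
    simp [h5]
  -- κ ≤ lam
  have hkl : κ ≤ lam := by
    by_contra h
    push_neg at h
    have hLcard : L.card < κ := by rw [hLdef, Cardinal.card_ord]; exact h
    have hLord : L < κ.ord := Cardinal.lt_ord.2 hLcard
    have hU : (⋃ x ∈ Set.Iio L, {z ∈ Z | x ∉ z}) ∈ I :=
      hcomp L _ hLord (fun x hx => hnorm.hat x hx)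
    have hIioZ : Set.Iio L ∈ Z := by
      rw [hZ]
      refine ⟨subset_refl _, ?_⟩
      rw [Ordinal.mk_Iio_ordinal, Cardinal.card_ord]
      exact Cardinal.lift_lt.2 h
    set U := ⋃ x ∈ Set.Iio L, {z ∈ Z | x ∉ z} with hUdef
    have hApos : Z \ U ∉ I := by
      intro hAI
      refine hI.proper (hI.mono (fun z hz => ?_) (hI.union hAI hU))
      by_cases hzu : z ∈ U
      · exact Or.inr hzu
      · exact Or.inl ⟨hz, hzu⟩
    have hsub : Z \ U ⊆ {Set.Iio L} := by
      intro z hz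
      have hzZ := hz.1
      have h1 : z ⊆ Set.Iio L := ((hZ ▸ hzZ : z ∈ Pkl κ L)).1
      have h2 : Set.Iio L ⊆ z := by
        intro x hx
        by_contra hxz
        exact hz.2 (Set.mem_biUnion hx ⟨hzZ, hxz⟩)
      exact subset_antisymm h1 h2
    exact hApos (hI.mono hsub (hI.nonprincipal _ hIioZ))
  -- basic powerlt facts
  have hlpow : lam ≤ lam ^< κ := by
    have := Cardinal.le_powerlt lam hκ1
    rwa [Cardinal.power_one] at this
  have hκpow : κ ≤ lam ^< κ := le_trans hkl hlpow
  have hpowinf : ℵ₀ ≤ lam ^< κ := le_trans hlam hlpow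
  -- cardinality of Z is at most lift (lam ^< κ)
  have hcard : #↥Z ≤ Cardinal.lift.{1} (lam ^< κ) := by
    have hXcard : #↥(Set.Iio L) = Cardinal.lift.{1} lam := by
      rw [hLdef, Ordinal.mk_Iio_ordinal, Cardinal.card_ord]
    -- Z embeds into the small subsets of ↥(Set.Iio L)
    have hres : ∀ z ∈ Z, Subtype.val '' ((fun s : Set Ordinal.{0} =>
        (Subtype.val ⁻¹' s : Set ↥(Set.Iio L))) z) = z := by
      intro z hz
      have hzm : z ∈ Pkl κ L := by rw [← hZ]; exact hz
      exact Set.image_preimage_eq_of_subset (by rw [Subtype.range_coe]; exact hzm.1)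
    have h1 : #↥Z ≤ #{s : Set ↥(Set.Iio L) // #↥s < Cardinal.lift.{1} κ} := by
      refine ⟨⟨fun z => ⟨(Subtype.val ⁻¹' z.val : Set ↥(Set.Iio L)), ?_⟩, ?_⟩⟩
      · have hzm : z.val ∈ Pkl κ L := by rw [← hZ]; exact z.prop
        have hpre : #↥(Subtype.val ⁻¹' z.val : Set ↥(Set.Iio L)) = #↥z.val :=
          Cardinal.mk_preimage_of_injective_of_subset_range _ _ Subtype.val_injective
            (by rw [Subtype.range_coe]; exact hzm.1)
        rw [hpre]
        exact hzm.2
      · intro z₁ z₂ he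
        simp only [Subtype.mk.injEq] at he
        apply Subtype.ext
        rw [← hres z₁.val z₁.prop, ← hres z₂.val z₂.prop]
        simp only []
        rw [he]
    -- the small subsets of ↥(Set.Iio L) number at most lift (lam ^< κ)
    have h2 : #{s : Set ↥(Set.Iio L) // #↥s < Cardinal.lift.{1} κ} ≤
        Cardinal.lift.{1} (lam ^< κ) := by
      have hG : ∀ s : {s : Set ↥(Set.Iio L) // #↥s < Cardinal.lift.{1} κ},
          ∃ c : Cardinal.{0}, c < κ ∧ Cardinal.lift.{1} c = #↥s.val := fun s => by
        obtain ⟨c, hc, hlc⟩ := Cardinal.lt_lift_iff.1 s.prop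
        exact ⟨c, hc, hlc⟩
      choose cOf hcOf hlcOf using hG
      set G : {s : Set ↥(Set.Iio L) // #↥s < Cardinal.lift.{1} κ} → ↥(Set.Iio κ.ord) :=
        fun s => ⟨(cOf s).ord, Set.mem_Iio.2 (Cardinal.ord_lt_ord.2 (hcOf s))⟩ with hGdef
      have hfib : ∀ y : ↥(Set.Iio κ.ord),
          #{s : {s : Set ↥(Set.Iio L) // #↥s < Cardinal.lift.{1} κ} // G s = y} ≤
            Cardinal.lift.{1} (lam ^< κ) := by
        intro y
        have hbound : #{s : {s : Set ↥(Set.Iio L) // #↥s < Cardinal.lift.{1} κ} // G s = y} ≤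
            #{t : Set ↥(Set.Iio L) // #↥t ≤ Cardinal.lift.{1} y.val.card} := by
          refine ⟨⟨fun s => ⟨s.val.val, ?_⟩, ?_⟩⟩
          · have hy : (cOf s.val).ord = y.val := congrArg Subtype.val s.prop
            have hcy : cOf s.val = y.val.card := by rw [← hy, Cardinal.card_ord]
            rw [← hlcOf s.val, hcy]
          · intro s₁ s₂ he
            simp only [Subtype.mk.injEq] at he
            exact Subtype.ext (Subtype.ext he)
        refine hbound.trans ((Cardinal.mk_bounded_set_le _ _).trans ?_)
        have hycard : y.val.card < κ := Cardinal.lt_ord.1 y.prop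
        have hmax : max #↥(Set.Iio L) ℵ₀ = Cardinal.lift.{1} lam := by
          rw [hXcard, max_eq_left (Cardinal.aleph0_le_lift.2 hlam)]
        rw [hmax, ← Cardinal.lift_power]
        exact Cardinal.lift_le.2 (Cardinal.le_powerlt lam hycard)
      calc #{s : Set ↥(Set.Iio L) // #↥s < Cardinal.lift.{1} κ}
          = #(Σ y : ↥(Set.Iio κ.ord),
              {s : {s : Set ↥(Set.Iio L) // #↥s < Cardinal.lift.{1} κ} // G s = y}) :=
            (Cardinal.mk_congr (Equiv.sigmaFiberEquiv G)).symm
        _ = Cardinal.sum (fun y => #{s : {s : Set ↥(Set.Iio L) //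
              #↥s < Cardinal.lift.{1} κ} // G s = y}) := Cardinal.mk_sigma _
        _ ≤ Cardinal.sum (fun _ : ↥(Set.Iio κ.ord) => Cardinal.lift.{1} (lam ^< κ)) :=
            Cardinal.sum_le_sum _ _ hfib
        _ = #↥(Set.Iio κ.ord) * Cardinal.lift.{1} (lam ^< κ) := Cardinal.sum_const' _ _
        _ = Cardinal.lift.{1} κ * Cardinal.lift.{1} (lam ^< κ) := by
            rw [Ordinal.mk_Iio_ordinal, Cardinal.card_ord]
        _ = Cardinal.lift.{1} (lam ^< κ) := by
            rw [← Cardinal.lift_mul, Cardinal.mul_eq_right hpowinf hκpow hκ0.ne']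
    exact h1.trans h2
  -- an injective indexing of Z below Lam
  have hcard2 : #↥Z ≤ #↥(Set.Iio Lam) := by
    rw [Ordinal.mk_Iio_ordinal, Cardinal.card_ord]; exact hcard
  obtain ⟨emb⟩ := (Cardinal.le_def _ _).1 hcard2
  set idx : Set Ordinal.{0} → Ordinal.{0} :=
    fun z => if h : z ∈ Z then (emb ⟨z, h⟩).val else 0 with hidxdef
  have hidx_lt : ∀ z ∈ Z, idx z < Lam := by
    intro z hz
    rw [hidxdef]
    simp only [dif_pos hz]
    exact (emb ⟨z, hz⟩).prop
  have hidx_inj : Set.InjOn idx Z := by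
    intro z₁ h₁ z₂ h₂ he
    rw [hidxdef] at he
    simp only [dif_pos h₁, dif_pos h₂] at he
    have := emb.injective (Subtype.ext he)
    exact congrArg Subtype.val this
  set Sset : Ordinal → Ordinal → Set (Set Ordinal.{0}) :=
    fun α c => {z | z ∈ Z ∧ f α (idx z) = c} with hSdef
  -- Step A: for each α < Lp find i < L and c < ν.ord with D i ⊆ Sset α c mod I
  have hstepA : ∀ α < Lp, ∃ i < L, ∃ c < ν.ord, D i \ Sset α c ∈ I := by
    intro α hα
    have hcov : Z ⊆ ⋃ c ∈ Set.Iio ν.ord, Sset α c := by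
      intro z hz
      exact Set.mem_biUnion (Set.mem_Iio.2 (hf α hα (idx z) (hidx_lt z hz))) ⟨hz, rfl⟩
    have hpos : ∃ c < ν.ord, Pos Z I (Sset α c) := by
      by_contra h
      push_neg at h
      have hnull : ∀ c < ν.ord, Sset α c ∈ I := by
        intro c hc
        by_contra h2
        exact h c hc ⟨fun z hz => hz.1, h2⟩
      exact hI.proper (hI.mono hcov (hcomp ν.ord (Sset α) (Cardinal.ord_lt_ord.2 hν) hnull))
    obtain ⟨c, hc, hposc⟩ := hpos
    obtain ⟨i, hi, hdiff⟩ := hDdense _ hposc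
    exact ⟨i, hi, c, hc, hdiff⟩
  -- Step B: pigeonhole to find a single (i₀, c₀) with a μ-sized fiber
  choose iF hiF cF hcF hDF using fun α : ↥(Set.Iio Lp) => hstepA α.val α.prop
  set g : ↥(Set.Iio Lp) → ↥(Set.Iio L) × ↥(Set.Iio ν.ord) :=
    fun α => (⟨iF α, hiF α⟩, ⟨cF α, hcF α⟩) with hgdef
  have hLpcard : #↥(Set.Iio Lp) = Cardinal.lift.{1} (Order.succ lam) := by
    rw [hLpdef, Ordinal.mk_Iio_ordinal, Cardinal.card_ord]
  have hfiber : ∃ p, Cardinal.lift.{1} μ ≤ #{α : ↥(Set.Iio Lp) // g α = p} := by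
    by_contra h
    push_neg at h
    have hsum : #↥(Set.Iio Lp) ≤ #(↥(Set.Iio L) × ↥(Set.Iio ν.ord)) * Cardinal.lift.{1} μ := by
      calc #↥(Set.Iio Lp) = #(Σ p, {α : ↥(Set.Iio Lp) // g α = p}) :=
            (Cardinal.mk_congr (Equiv.sigmaFiberEquiv g)).symm
        _ = Cardinal.sum (fun p => #{α : ↥(Set.Iio Lp) // g α = p}) := Cardinal.mk_sigma _
        _ ≤ Cardinal.sum (fun _ : ↥(Set.Iio L) × ↥(Set.Iio ν.ord) => Cardinal.lift.{1} μ) :=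
            Cardinal.sum_le_sum _ _ (fun p => (h p).le)
        _ = _ := Cardinal.sum_const' _ _
    have hprod : #(↥(Set.Iio L) × ↥(Set.Iio ν.ord)) = Cardinal.lift.{1} (lam * ν) := by
      rw [Cardinal.mk_prod, Ordinal.mk_Iio_ordinal, Ordinal.mk_Iio_ordinal, hLdef,
        Cardinal.card_ord, Cardinal.card_ord, Cardinal.lift_id, Cardinal.lift_id,
        Cardinal.lift_mul]
    have hle : Cardinal.lift.{1} (Order.succ lam) ≤ Cardinal.lift.{1} (lam * ν * μ) := by
      rw [← hLpcard, Cardinal.lift_mul, ← hprod]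
      exact hsum
    have hsmall : lam * ν * μ ≤ lam := by
      calc lam * ν * μ ≤ lam * lam * lam :=
            mul_le_mul' (mul_le_mul' le_rfl (hν.le.trans hkl)) (hμ.le.trans hkl)
        _ = lam := by rw [Cardinal.mul_eq_self hlam, Cardinal.mul_eq_self hlam]
    have hcontr : Order.succ lam ≤ lam := Cardinal.lift_le.1 (hle.trans (Cardinal.lift_le.2 hsmall))
    exact absurd hcontr (not_le.2 (Order.lt_succ lam))
  obtain ⟨⟨⟨i₀, hi₀⟩, ⟨c₀, hc₀⟩⟩, hp₀⟩ := hfiber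
  set Afib : Set ↥(Set.Iio Lp) := {α | g α = (⟨i₀, hi₀⟩, ⟨c₀, hc₀⟩)} with hAfibdef
  have hAfibcard : Cardinal.lift.{1} μ ≤ #↥(Subtype.val '' Afib) := by
    rw [Cardinal.mk_image_eq_of_injOn _ _ Subtype.val_injective.injOn]
    exact hp₀
  obtain ⟨A, hAsub, hAcard⟩ := Cardinal.le_mk_iff_exists_subset.1 hAfibcard
  have hAIio : A ⊆ Set.Iio Lp := by
    intro α hα
    obtain ⟨x, hx, rfl⟩ := hAsub hα
    exact x.prop
  have hAkey : ∀ α ∈ A, D i₀ \ Sset α c₀ ∈ I := by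
    intro α hα
    obtain ⟨x, hx, rfl⟩ := hAsub hα
    have h1 := hDF x
    have hg2 : g x = (⟨i₀, hi₀⟩, ⟨c₀, hc₀⟩) := hx
    have hi : iF x = i₀ := congrArg (fun p => p.1.val) hg2
    have hc : cF x = c₀ := congrArg (fun p => p.2.val) hg2
    rwa [hi, hc] at h1
  -- Step C: intersect D i₀ with the μ-many positive sets
  have hμord : μ.ord < κ.ord := Cardinal.ord_lt_ord.2 hμ
  have hEq : #↥(Set.Iio μ.ord) = #↥A := by
    rw [Ordinal.mk_Iio_ordinal, Cardinal.card_ord, hAcard]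
  obtain ⟨eqv⟩ := Cardinal.eq.1 hEq
  set gN : Ordinal → Set (Set Ordinal.{0}) :=
    fun j => if h : j < μ.ord then D i₀ \ Sset (eqv ⟨j, h⟩).val c₀ else ∅ with hgNdef
  have hgN : ∀ j < μ.ord, gN j ∈ I := by
    intro j hj
    rw [hgNdef]
    simp only []
    rw [dif_pos hj]
    exact hAkey _ (eqv ⟨j, hj⟩).prop
  have hN : (⋃ j ∈ Set.Iio μ.ord, gN j) ∈ I := hcomp μ.ord gN hμord hgN
  set T : Set (Set Ordinal.{0}) := D i₀ \ ⋃ j ∈ Set.Iio μ.ord, gN j with hTdef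
  have hDi₀ : Pos Z I (D i₀) := hDpos i₀ hi₀
  have hTZ : T ⊆ Z := fun z hz => hDi₀.1 hz.1
  have hTpos : Pos Z I T := by
    refine ⟨hTZ, fun hTI => hDi₀.2 (hI.mono (fun z hz => ?_) (hI.union hTI hN))⟩
    by_cases hzn : z ∈ ⋃ j ∈ Set.Iio μ.ord, gN j
    · exact Or.inr hzn
    · exact Or.inl ⟨hz, hzn⟩
  have hT : ∀ z ∈ T, ∀ α ∈ A, z ∈ Sset α c₀ := by
    intro z hz α hα
    set x := eqv.symm ⟨α, hα⟩ with hxdef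
    by_contra hzS
    refine hz.2 (Set.mem_biUnion (Set.mem_Iio.2 x.prop) ?_)
    have hval : (eqv ⟨x.val, x.prop⟩).val = α := by
      rw [show (⟨x.val, x.prop⟩ : ↥(Set.Iio μ.ord)) = x from rfl, hxdef,
        Equiv.apply_symm_apply]
    show z ∈ gN x.val
    rw [hgNdef]
    simp only []
    rw [dif_pos (show x.val < μ.ord from x.prop), hval]
    exact ⟨hz.1, hzS⟩
  -- Step D: produce B from T
  have hTbig : Cardinal.lift.{1} η ≤ #↥T := hbig T hTpos
  have himg : #↥(idx '' T) = #↥T :=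
    Cardinal.mk_image_eq_of_injOn idx T (Set.InjOn.mono hTZ hidx_inj)
  obtain ⟨B, hBsub, hBcard⟩ := Cardinal.le_mk_iff_exists_subset.1 (himg ▸ hTbig)
  refine ⟨A, B, c₀, hAIio, hAcard, ?_, hBcard, ?_⟩
  · intro β hβ
    obtain ⟨z, hzT, rfl⟩ := hBsub hβ
    exact Set.mem_Iio.2 (hidx_lt z (hTZ hzT))
  · intro α hα β hβ
    obtain ⟨z, hzT, rfl⟩ := hBsub hβ
    exact (hT z hzT α hα).2
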